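/- Let n ≥ 1. In the Lie algebra gl(n+2, ℝ) of real (n+2)×(n+2) matrices with bracket [A,B] = AB − BA, define (rows and columns indexed 1, …, n+2): E₁ is the matrix with entry −1 in position (2, n+2), entry −(j−1) in position (j, j−1) for 3 ≤ j ≤ n+1, and all other entries 0; for 2 ≤ i ≤ n+1, Eᵢ is the matrix whose only nonzero entry is 1 in position (1, n+3−i); and E_{n+2} is the matrix whose only nonzero entry is 1 in position (1, n+2). Then E₁, …, E_{n+2} are linearly independent and satisfy [E₁, Eᵢ] = (n+2−i)·E_{i+1} for 2 ≤ i ≤ n+1 and [Eᵢ, Eⱼ] = 0 for all 2 ≤ i, j ≤ n+2; consequently their linear span is a Lie subalgebra of gl(n+2, ℝ) isomorphic to the elementary filiform Lie algebra f_{n+2}. -/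

import Mathlib

attribute [local instance 100] LieRing.ofAssociativeRing

/-- For `n ≥ 1`, consider `gl(n+2, ℝ)` (real `(n+2)×(n+2)` matrices with the
commutator bracket), with indices `0, …, n+1` corresponding to `1, …, n+2`.
Define `E 0` (i.e. `E₁`) to have entry `−1` at position `(1, n+1)` (one-based
`(2, n+2)`), entry `−(j−1)` at one-based position `(j, j−1)` for `3 ≤ j ≤ n+1`
(zero-based entry `−p` at `(p, p−1)` for `2 ≤ p ≤ n`), and zeros elsewhere; for
one-based `2 ≤ i ≤ n+1` (zero-based `1 ≤ i ≤ n`) let `E i` have a single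
nonzero entry `1` at one-based `(1, n+3−i)` (zero-based `(0, n+1−i)`); and let
`E (n+1)` (i.e. `E_{n+2}`) have single entry `1` at zero-based `(0, n+1)`.
Then the `E i` are linearly independent, satisfy the filiform relations, and
their linear span is a Lie subalgebra of `gl(n+2, ℝ)` isomorphic to the
elementary filiform Lie algebra `f_{n+2}` (presented abstractly by `L`). -/
theorem stmt5
    (n : ℕ) (hn : 1 ≤ n)
    (L : Type) [LieRing L] [LieAlgebra ℝ L]
    (e : Fin (n + 2) → L)
    (hindep : LinearIndependent ℝ e)
    (hspan : Submodule.span ℝ (Set.range e) = ⊤)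
    (hbr : ∀ j : Fin (n + 2), ∀ _h1 : 1 ≤ (j : ℕ), ∀ _h2 : (j : ℕ) ≤ n,
      ⁅e 0, e j⁆ = ((n + 1 - (j : ℕ) : ℕ) : ℝ) • e ⟨(j : ℕ) + 1, by omega⟩)
    (hlast : ⁅e 0, e ⟨n + 1, by omega⟩⁆ = 0)
    (hzero : ∀ i j : Fin (n + 2), (i : ℕ) ≠ 0 → (j : ℕ) ≠ 0 → ⁅e i, e j⁆ = 0)
    (E : Fin (n + 2) → Matrix (Fin (n + 2)) (Fin (n + 2)) ℝ)
    (hE0 : E 0 = Matrix.of fun p q : Fin (n + 2) =>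
      if (p : ℕ) = 1 ∧ (q : ℕ) = n + 1 then (-1 : ℝ)
      else if 2 ≤ (p : ℕ) ∧ (p : ℕ) ≤ n ∧ (q : ℕ) + 1 = (p : ℕ) then -((p : ℕ) : ℝ)
      else 0)
    (hEmid : ∀ i : Fin (n + 2), ∀ _h1 : 1 ≤ (i : ℕ), ∀ _h2 : (i : ℕ) ≤ n,
      E i = Matrix.single 0 ⟨n + 1 - (i : ℕ), by omega⟩ (1 : ℝ))
    (hElast : E ⟨n + 1, by omega⟩ =
      Matrix.single 0 ⟨n + 1, by omega⟩ (1 : ℝ)) :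
    LinearIndependent ℝ E ∧
      (∀ i : Fin (n + 2), ∀ _h1 : 1 ≤ (i : ℕ), ∀ _h2 : (i : ℕ) ≤ n,
        ⁅E 0, E i⁆ = ((n + 1 - (i : ℕ) : ℕ) : ℝ) • E ⟨(i : ℕ) + 1, by omega⟩) ∧
      (∀ i j : Fin (n + 2), (i : ℕ) ≠ 0 → (j : ℕ) ≠ 0 → ⁅E i, E j⁆ = 0) ∧
      ∃ S : LieSubalgebra ℝ (Matrix (Fin (n + 2)) (Fin (n + 2)) ℝ),
        S.toSubmodule = Submodule.span ℝ (Set.range E) ∧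
        Nonempty (L ≃ₗ⁅ℝ⁆ S) := by
  -- the column index of the single entry of `E i`, for `i ≠ 0`
  set c : Fin (n + 2) → Fin (n + 2) := fun i =>
    if (i : ℕ) = n + 1 then ⟨n + 1, by omega⟩ else ⟨n + 1 - (i : ℕ), by omega⟩ with hc
  have cval : ∀ i : Fin (n + 2),
      ((c i : Fin (n+2)) : ℕ) = if (i : ℕ) = n + 1 then n + 1 else n + 1 - (i : ℕ) := by
    intro i; rw [hc]; split_ifs with h <;> simp [h]
  have cne0 : ∀ i : Fin (n + 2), (i : ℕ) ≠ 0 → ((c i : Fin (n+2)) : ℕ) ≠ 0 := by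
    intro i hi; rw [cval]; have := i.isLt; split_ifs <;> omega
  have cinj : ∀ i j : Fin (n + 2), (i : ℕ) ≠ 0 → (j : ℕ) ≠ 0 → c i = c j → i = j := by
    intro i j hi hj h
    have h' : ((c i : Fin (n+2)) : ℕ) = ((c j : Fin (n+2)) : ℕ) := by rw [h]
    rw [cval, cval] at h'
    have hi' := i.isLt; have hj' := j.isLt
    apply Fin.ext
    split_ifs at h' <;> omega
  have Estd : ∀ i : Fin (n + 2), (i : ℕ) ≠ 0 →
      E i = Matrix.single 0 (c i) (1 : ℝ) := by
    intro i hi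
    by_cases h : (i : ℕ) = n + 1
    · have hieq : i = ⟨n + 1, by omega⟩ := Fin.ext h
      rw [hieq, hElast]; congr 1
      rw [hc]; simp [h]
    · have h1 : 1 ≤ (i : ℕ) := by omega
      have h2 : (i : ℕ) ≤ n := by have := i.isLt; omega
      rw [hEmid i h1 h2]; congr 1
      rw [hc]; simp [h]
  -- row/column facts about E 0 (stated with `Nat`-valued side conditions for robustness)
  have hrow0 : ∀ z q : Fin (n + 2), (z : ℕ) = 0 → E 0 z q = 0 := by
    intro z q hz; rw [hE0]
    simp only [Matrix.of_apply]
    rw [if_neg (by omega), if_neg (by omega)]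
  have hrowlast : ∀ z q : Fin (n + 2), (z : ℕ) = n + 1 → E 0 z q = 0 := by
    intro z q hz; rw [hE0]
    simp only [Matrix.of_apply]
    rw [if_neg (by omega), if_neg (by omega)]
  have hcol0 : ∀ p w : Fin (n + 2), (w : ℕ) = 0 → E 0 p w = 0 := by
    intro p w hw; rw [hE0]
    simp only [Matrix.of_apply]
    rw [if_neg (by omega), if_neg (by omega)]
  have hrow1 : ∀ z q : Fin (n + 2), (z : ℕ) = 1 →
      E 0 z q = if (q : ℕ) = n + 1 then (-1 : ℝ) else 0 := by
    intro z q hz; rw [hE0]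
    simp only [Matrix.of_apply]
    split_ifs with h1 h2 h3 <;> first | rfl | (exfalso; omega)
  have hrowk : ∀ z q : Fin (n + 2), 2 ≤ (z : ℕ) → (z : ℕ) ≤ n →
      E 0 z q = if (q : ℕ) = (z : ℕ) - 1 then -(((z : ℕ)) : ℝ) else 0 := by
    intro z q hz1 hz2; rw [hE0]
    simp only [Matrix.of_apply]
    split_ifs with h1 h2 h3 <;> first | rfl | (exfalso; omega)
  -- generic entry formula for stdBasisMatrix, and products with E 0
  have stdapp : ∀ (z w : Fin (n+2)) (v : ℝ) (p q : Fin (n+2)),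
      Matrix.single z w v p q = if z = p ∧ w = q then v else 0 := by
    intro z w v p q; rfl
  have hmul1 : ∀ z k : Fin (n + 2), (z : ℕ) = 0 →
      E 0 * Matrix.single z k (1 : ℝ) = 0 := by
    intro z k hz; ext p q
    rw [Matrix.mul_apply, Matrix.zero_apply]
    apply Finset.sum_eq_zero
    intro r _
    rw [stdapp]
    rcases eq_or_ne z r with rfl | h
    · rw [hcol0 p z hz, zero_mul]
    · rw [if_neg (fun hh => h hh.1), mul_zero]
  have hmul2 : ∀ z k j : Fin (n + 2), ∀ v : ℝ, (z : ℕ) = 0 →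
      (∀ q, E 0 k q = if (q : ℕ) = (j : ℕ) then v else 0) →
      Matrix.single z k (1 : ℝ) * E 0 = Matrix.single z j v := by
    intro z k j v hz hrow; ext p q
    rw [Matrix.mul_apply, stdapp]
    rcases eq_or_ne z p with rfl | h
    · rw [Finset.sum_eq_single k]
      · rw [stdapp, if_pos ⟨rfl, rfl⟩, one_mul, hrow q]
        rcases eq_or_ne q j with rfl | hq
        · rw [if_pos rfl, if_pos ⟨rfl, rfl⟩]
        · rw [if_neg (fun hh => hq (Fin.ext hh)), if_neg (fun hh => hq hh.2.symm)]
      · intro r _ hr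
        rw [stdapp, if_neg (fun hh => hr hh.2.symm), zero_mul]
      · intro hmem; exact absurd (Finset.mem_univ k) hmem
    · rw [if_neg (fun hh => h hh.1)]
      apply Finset.sum_eq_zero
      intro r _
      rw [stdapp, if_neg (fun hh => h hh.1), zero_mul]
  -- the filiform relations for E
  have hbrE : ∀ i : Fin (n + 2), ∀ _h1 : 1 ≤ (i : ℕ), ∀ _h2 : (i : ℕ) ≤ n,
      ⁅E 0, E i⁆ = ((n + 1 - (i : ℕ) : ℕ) : ℝ) • E ⟨(i : ℕ) + 1, by omega⟩ := by
    intro i h1 h2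
    rw [Ring.lie_def]
    have e1 : E 0 * E i = 0 := by
      rw [hEmid i h1 h2]; exact hmul1 _ _ rfl
    by_cases hi : (i : ℕ) = n
    · have e2 : E i * E 0 = Matrix.single 0 ⟨n + 1, by omega⟩ (-1 : ℝ) := by
        rw [hEmid i h1 h2]
        refine hmul2 _ _ _ _ rfl ?_
        intro q
        exact hrow1 _ q (show n + 1 - (i : ℕ) = 1 by omega)
      rw [e1, e2, zero_sub]
      have hsucc : (⟨(i : ℕ) + 1, by omega⟩ : Fin (n + 2)) = ⟨n + 1, by omega⟩ :=
        Fin.ext (show (i : ℕ) + 1 = n + 1 by omega)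
      simp only [hsucc, hElast]
      ext p q
      rw [Matrix.neg_apply, stdapp, Matrix.smul_apply, stdapp, smul_eq_mul,
        show (n + 1 - (i : ℕ) : ℕ) = 1 by omega]
      split_ifs <;> norm_num
    · have e2 : E i * E 0 =
          Matrix.single 0 ⟨n + 1 - (i : ℕ) - 1, by omega⟩
            (-(((n + 1 - (i : ℕ) : ℕ)) : ℝ)) := by
        rw [hEmid i h1 h2]
        refine hmul2 _ _ _ _ rfl ?_
        intro q
        have hr := hrowk ⟨n + 1 - (i : ℕ), by omega⟩ q
          (show 2 ≤ n + 1 - (i : ℕ) by omega) (show n + 1 - (i : ℕ) ≤ n by omega)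
        exact hr
      rw [e1, e2, zero_sub]
      rw [hEmid ⟨(i : ℕ) + 1, by omega⟩ (show 1 ≤ (i : ℕ) + 1 by omega)
        (show (i : ℕ) + 1 ≤ n by omega)]
      have hcols : (⟨n + 1 - (((⟨(i : ℕ) + 1, by omega⟩ : Fin (n + 2))) : ℕ), by omega⟩ :
          Fin (n + 2)) = ⟨n + 1 - (i : ℕ) - 1, by omega⟩ :=
        Fin.ext (show n + 1 - ((i : ℕ) + 1) = n + 1 - (i : ℕ) - 1 by omega)
      rw [hcols]
      ext p q
      rw [Matrix.neg_apply, stdapp, Matrix.smul_apply, stdapp, smul_eq_mul]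
      split_ifs <;> norm_num
  have hblast : ⁅E 0, E ⟨n + 1, by omega⟩⁆ = 0 := by
    rw [Ring.lie_def]
    have e1 : E 0 * E ⟨n + 1, by omega⟩ = 0 := by
      rw [hElast]; exact hmul1 _ _ rfl
    have e2 : E ⟨n + 1, by omega⟩ * E 0 =
        Matrix.single 0 ⟨n + 1, by omega⟩ (0 : ℝ) := by
      rw [hElast]
      refine hmul2 _ _ _ _ rfl ?_
      intro q
      rw [hrowlast _ q rfl]
      split_ifs <;> rfl
    rw [e1, e2, zero_sub]
    ext p q
    rw [Matrix.neg_apply, stdapp, Matrix.zero_apply]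
    split_ifs <;> norm_num
  have hzeroE : ∀ i j : Fin (n + 2), (i : ℕ) ≠ 0 → (j : ℕ) ≠ 0 → ⁅E i, E j⁆ = 0 := by
    intro i j hi hj
    rw [Ring.lie_def]
    have hci : c i ≠ 0 := fun h => cne0 i hi (by rw [h]; rfl)
    have hcj : c j ≠ 0 := fun h => cne0 j hj (by rw [h]; rfl)
    have e1 : E i * E j = 0 := by
      rw [Estd i hi, Estd j hj]
      exact Matrix.single_mul_single_of_ne (i := 0) (j := c i) (c := (1 : ℝ))
        (k := 0) hci 1
    have e2 : E j * E i = 0 := by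
      rw [Estd i hi, Estd j hj]
      exact Matrix.single_mul_single_of_ne (i := 0) (j := c j) (c := (1 : ℝ))
        (k := 0) hcj 1
    rw [e1, e2, sub_zero]
  -- linear independence of E
  have hindepE : LinearIndependent ℝ E := by
    rw [Fintype.linearIndependent_iff]
    intro g hg
    have hent : ∀ p q : Fin (n + 2), (∑ i, g i * E i p q) = 0 := by
      intro p q
      have h := congrFun (congrFun hg p) q
      simpa [Matrix.sum_apply, smul_eq_mul] using h
    intro i
    by_cases hi : (i : ℕ) = 0
    · have h := hent ⟨1, by omega⟩ ⟨n + 1, by omega⟩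
      rw [Finset.sum_eq_single i] at h
      · have hi0 : i = 0 := Fin.ext hi
        rw [hi0, hrow1 _ _ rfl] at h
        rw [if_pos rfl] at h
        have : g 0 = 0 := by linarith [h]
        rw [hi0]; exact this
      · intro j _ hji
        have hj : (j : ℕ) ≠ 0 := fun h0 => hji (by
          have : j = i := Fin.ext (by omega)
          exact this)
        rw [Estd j hj, stdapp,
          if_neg (fun hh => by
            have h0 := congrArg Fin.val hh.1
            simp at h0), mul_zero]
      · intro hmem; exact absurd (Finset.mem_univ i) hmem
    · have h := hent 0 (c i)
      rw [Finset.sum_eq_single i] at h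
      · rw [Estd i hi, stdapp, if_pos ⟨rfl, rfl⟩, mul_one] at h
        exact h
      · intro j _ hji
        by_cases hj : (j : ℕ) = 0
        · have hj0 : j = 0 := Fin.ext hj
          rw [hj0, hrow0 0 (c i) rfl, mul_zero]
        · rw [Estd j hj, stdapp,
            if_neg (fun hh => hji (cinj j i hj hi hh.2)), mul_zero]
      · intro hmem; exact absurd (Finset.mem_univ i) hmem
  refine ⟨hindepE, fun i h1 h2 => hbrE i h1 h2, hzeroE, ?_⟩
  -- the Lie algebra isomorphism onto the span
  obtain ⟨hb, hbeq⟩ : ∃ b : Module.Basis (Fin (n + 2)) ℝ L,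
      (∀ i, b i = e i) ∧ ∀ (f : Fin (n + 2) → Matrix (Fin (n + 2)) (Fin (n + 2)) ℝ) i,
        (b.constr ℝ f) (b i) = f i :=
    ⟨Module.Basis.mk hindep (le_of_eq hspan.symm),
      fun i => Module.Basis.mk_apply hindep (le_of_eq hspan.symm) i,
      fun f i => Module.Basis.constr_basis _ ℝ f i⟩
  set φ : L →ₗ[ℝ] Matrix (Fin (n + 2)) (Fin (n + 2)) ℝ := hb.constr ℝ E with hφ
  have hφe : ∀ i, φ (e i) = E i := by
    intro i
    rw [← hbeq.1 i, hφ]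
    exact hbeq.2 E i
  -- bracket preservation on basis vectors with first argument `e 0`
  have key0 : ∀ j : Fin (n + 2), φ ⁅e 0, e j⁆ = ⁅φ (e 0), φ (e j)⁆ := by
    intro j
    by_cases hj : (j : ℕ) = 0
    · have hj0 : j = 0 := Fin.ext hj
      rw [hj0, lie_self, map_zero, lie_self]
    · by_cases hjn : (j : ℕ) = n + 1
      · have hj1 : j = ⟨n + 1, by omega⟩ := Fin.ext hjn
        rw [hj1, hlast, map_zero, hφe, hφe, hblast]
      · have h1 : 1 ≤ (j : ℕ) := by omega
        have h2 : (j : ℕ) ≤ n := by have := j.isLt; omega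
        rw [hbr j h1 h2, map_smul, hφe, hφe, hφe, hbrE j h1 h2]
  have key : ∀ i j : Fin (n + 2), φ ⁅e i, e j⁆ = ⁅φ (e i), φ (e j)⁆ := by
    intro i j
    by_cases hi : (i : ℕ) = 0
    · have hi0 : i = 0 := Fin.ext hi
      rw [hi0]; exact key0 j
    · by_cases hj : (j : ℕ) = 0
      · have hj0 : j = 0 := Fin.ext hj
        rw [hj0]
        calc φ ⁅e i, e 0⁆ = φ (-⁅e 0, e i⁆) := by rw [lie_skew]
          _ = -φ ⁅e 0, e i⁆ := map_neg φ _
          _ = -⁅φ (e 0), φ (e i)⁆ := by rw [key0 i]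
          _ = ⁅φ (e i), φ (e 0)⁆ := lie_skew _ _
      · rw [hzero i j hi hj, map_zero, hφe, hφe, hzeroE i j hi hj]
  have keyg : ∀ (i : Fin (n + 2)) (y : L), φ ⁅e i, y⁆ = ⁅φ (e i), φ y⁆ := by
    intro i y
    have hy : y ∈ Submodule.span ℝ (Set.range e) := by rw [hspan]; trivial
    induction hy using Submodule.span_induction with
    | mem x hx =>
      obtain ⟨j, rfl⟩ := hx
      exact key i j
    | zero => simp only [lie_zero, map_zero]
    | add x y hx hy ihx ihy => simp only [lie_add, map_add, ihx, ihy]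
    | smul r x hx ihx => simp only [lie_smul, map_smul, ihx]
  have hmaplie : ∀ x y : L, φ ⁅x, y⁆ = ⁅φ x, φ y⁆ := by
    intro x y
    have hx : x ∈ Submodule.span ℝ (Set.range e) := by rw [hspan]; trivial
    induction hx using Submodule.span_induction with
    | mem x hx =>
      obtain ⟨i, rfl⟩ := hx
      exact keyg i y
    | zero => simp only [zero_lie, map_zero]
    | add a b ha hb iha ihb => simp only [add_lie, map_add, iha, ihb]
    | smul r a ha iha => simp only [smul_lie, map_smul, iha]
  let ψ : L →ₗ⁅ℝ⁆ Matrix (Fin (n + 2)) (Fin (n + 2)) ℝ :=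
    { φ with map_lie' := fun {x y} => hmaplie x y }
  have hψ : ∀ x, ψ x = φ x := fun _ => rfl
  have hinj : Function.Injective ψ := by
    have hker : ∀ x : L, φ x = 0 → x = 0 := by
      intro x hx0
      have hsum : (∑ i, hb.repr x i • E i) = 0 := by
        have : φ (∑ i, hb.repr x i • hb i) = ∑ i, hb.repr x i • E i := by
          rw [map_sum]
          refine Finset.sum_congr rfl fun i _ => ?_
          rw [map_smul, hbeq.1 i, hφe i]
        rw [hb.sum_repr x] at this
        rw [← this, hx0]
      have hz := Fintype.linearIndependent_iff.mp hindepE _ hsum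
      have := hb.sum_repr x
      rw [← this]
      refine Finset.sum_eq_zero fun i _ => ?_
      rw [hz i, zero_smul]
    intro a b hab
    have : φ (a - b) = 0 := by
      rw [map_sub, ← hψ, ← hψ, hab, sub_self]
    have := hker _ this
    exact sub_eq_zero.mp this
  refine ⟨(ψ.range : LieSubalgebra ℝ (Matrix (Fin (n + 2)) (Fin (n + 2)) ℝ)), ?_, ?_⟩
  · have : (ψ.range).toSubmodule = LinearMap.range φ := rfl
    rw [this, hφ, Module.Basis.constr_range]
  · exact ⟨LieEquiv.ofInjective ψ hinj⟩
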